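/- Let q be a probability density on ℝ^d with associated probability measure Q, let r > 0, and suppose that for Q-almost every y in supp(q) = {x : q(x) > 0} there exist an axis-aligned closed cube C(y) of side length r containing y and an axis-aligned closed cube Q_y ⊆ C(y) ∩ supp(q) of side length r/2 having y as one of its vertices. Define D_r(y) = log(q(y) / inf_{z ∈ C(y)} q(z)) ∈ [0, ∞]. Then log_+ q(y) ≤ D_r(y) + d·log_+(2/r) for Q-almost every y ∈ supp(q), and consequently ∫_{ℝ^d} q(y) log_+ q(y) dy ≤ ∫_{supp(q)} D_r(y) dQ(y) + d·log_+(2/r). -/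
import Mathlib


open MeasureTheory Matrix
open scoped ENNReal NNReal BigOperators

/-- The Gaussian density on `ℝ^d` with mean `μ` and covariance matrix `S`. -/
noncomputable def gaussDensity {d : ℕ} (μ : EuclideanSpace ℝ (Fin d))
    (S : Matrix (Fin d) (Fin d) ℝ) (x : EuclideanSpace ℝ (Fin d)) : ℝ :=
  (Real.sqrt ((2 * Real.pi) ^ d * S.det))⁻¹ *
    Real.exp (-(1 / 2) * ((fun i => x i - μ i) ⬝ᵥ S⁻¹.mulVec (fun i => x i - μ i)))

/-- `g` is a finite Gaussian mixture density on `ℝ^d`. -/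
def IsGaussianMixture {d : ℕ} (g : EuclideanSpace ℝ (Fin d) → ℝ) : Prop :=
  ∃ (m : ℕ) (w : Fin m → ℝ) (μ : Fin m → EuclideanSpace ℝ (Fin d))
    (S : Fin m → Matrix (Fin d) (Fin d) ℝ),
    (∀ j, 0 ≤ w j) ∧ (∑ j, w j = 1) ∧ (∀ j, (S j).PosDef) ∧
    ∀ x, g x = ∑ j, w j * gaussDensity (μ j) (S j) x

/-- `f` is a probability density with respect to the measure `μ`. -/
def IsProbDensity {α : Type*} [MeasurableSpace α] (μ : Measure α) (f : α → ℝ) : Prop :=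
  Measurable f ∧ (∀ x, 0 ≤ f x) ∧ ∫⁻ x, ENNReal.ofReal (f x) ∂μ = 1

/-- Kullback–Leibler divergence `∫ f log (f/g)` as an extended real number:
it equals `+∞` exactly when the positive part of the integrand has infinite integral
(the negative part being automatically integrable for probability densities). -/
noncomputable def KL {α : Type*} [MeasurableSpace α] (μ : Measure α) (f g : α → ℝ) : EReal :=
  ((∫⁻ x, ENNReal.ofReal (f x * Real.log (f x / g x)) ∂μ : ℝ≥0∞) : EReal)
  - ((∫⁻ x, ENNReal.ofReal (-(f x * Real.log (f x / g x))) ∂μ : ℝ≥0∞) : EReal)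

/-- `log_+ t = max (log t) 0`; note `Real.log 0 = 0` so `logPlus 0 = 0`. -/
noncomputable def logPlus (t : ℝ) : ℝ := max (Real.log t) 0

/-- Uniform integrability of a family of nonnegative functions under `F`:
`lim_{M→∞} sup_m ∫_{X_m > M} X_m dF = 0`. -/
def UIFamily {α : Type*} [MeasurableSpace α] (F : Measure α) (X : ℕ → α → ℝ) : Prop :=
  Filter.Tendsto (fun M : ℝ => ⨆ m, ∫⁻ x in {x | M < X m x}, ENNReal.ofReal (X m x) ∂F)
    Filter.atTop (nhds 0)

/-- entropy bound on the fixed-scale class.  Cubes are axis-aligned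
closed cubes `Set.Icc c (c + r • 1)` in `ℝ^d = Fin d → ℝ`.  `D` is the log-oscillation
`log (q y / inf_{z ∈ C y} q z)`, valued in `ℝ≥0∞`, equal to `⊤` when the infimum is `0`. -/
theorem entropy_bound_fixed_scale {d : ℕ}
    (q : (Fin d → ℝ) → ℝ) (hq : IsProbDensity volume q)
    (Q : Measure (Fin d → ℝ))
    (hQ : Q = volume.withDensity fun x => ENNReal.ofReal (q x))
    (r : ℝ) (hr : 0 < r)
    (C : (Fin d → ℝ) → Set (Fin d → ℝ))
    (hC : ∀ᵐ y ∂Q, 0 < q y →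
      (∃ c : Fin d → ℝ, C y = Set.Icc c (fun i => c i + r)) ∧ y ∈ C y ∧
      ∃ a : Fin d → ℝ,
        Set.Icc a (fun i => a i + r / 2) ⊆ C y ∩ {x | 0 < q x} ∧
        (∀ i, a i = y i ∨ a i + r / 2 = y i))
    (D : (Fin d → ℝ) → ℝ≥0∞)
    (hD : ∀ y, D y = if sInf (q '' C y) ≤ 0 then ⊤
        else ENNReal.ofReal (Real.log (q y / sInf (q '' C y)))) :
    (∀ᵐ y ∂Q, 0 < q y →
        ENNReal.ofReal (logPlus (q y)) ≤ D y + d * ENNReal.ofReal (logPlus (2 / r))) ∧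
    ∫⁻ y, ENNReal.ofReal (q y * logPlus (q y)) ≤
      (∫⁻ y in {x | 0 < q x}, D y ∂Q) + d * ENNReal.ofReal (logPlus (2 / r)) := by
  obtain ⟨hmq, hqnn, hint⟩ := hq
  set c0 : ℝ≥0∞ := (d : ℝ≥0∞) * ENNReal.ofReal (logPlus (2 / r)) with hc0
  have hr2 : (0:ℝ) < r / 2 := by linarith
  have hkey : ∀ᵐ y ∂Q, 0 < q y →
      ENNReal.ofReal (logPlus (q y)) ≤ D y + c0 := by
    filter_upwards [hC] with y hy hqy
    obtain ⟨⟨c, hCy⟩, hyC, a, hsub, -⟩ := hy hqy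
    by_cases hm : sInf (q '' C y) ≤ 0
    · rw [hD, if_pos hm]; simp
    push_neg at hm
    set m := sInf (q '' C y) with hmdef
    have hbdd : BddBelow (q '' C y) := ⟨0, by rintro t ⟨z, -, rfl⟩; exact hqnn z⟩
    have hminf : ∀ z ∈ C y, m ≤ q z := fun z hz => csInf_le hbdd ⟨z, hz, rfl⟩
    have hvol : ENNReal.ofReal m * ENNReal.ofReal (r / 2) ^ d ≤ 1 := by
      calc ENNReal.ofReal m * ENNReal.ofReal (r / 2) ^ d
          = ∫⁻ _ in Set.Icc a (fun i => a i + r / 2), ENNReal.ofReal m := by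
            rw [setLIntegral_const, Real.volume_Icc_pi]
            simp [add_sub_cancel_left]
        _ ≤ ∫⁻ x in Set.Icc a (fun i => a i + r / 2), ENNReal.ofReal (q x) :=
            setLIntegral_mono hmq.ennreal_ofReal fun x hx =>
              ENNReal.ofReal_le_ofReal (hminf x ((hsub hx).1))
        _ ≤ ∫⁻ x, ENNReal.ofReal (q x) := setLIntegral_le_lintegral _ _
        _ = 1 := hint
    have hm1 : m * (r / 2) ^ d ≤ 1 := by
      rw [← ENNReal.ofReal_pow hr2.le, ← ENNReal.ofReal_mul hm.le,
        ENNReal.ofReal_le_one] at hvol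
      exact hvol
    have hpow : (0:ℝ) < (r / 2) ^ d := pow_pos hr2 d
    have hmle : m ≤ (2 / r) ^ d := by
      have h2r : (2 / r : ℝ) ^ d = 1 / (r / 2) ^ d := by
        rw [one_div, ← inv_pow, inv_div]
      rw [h2r, le_div_iff₀ hpow]
      exact hm1
    have hlogm : Real.log m ≤ (d : ℝ) * logPlus (2 / r) := by
      have h1 : Real.log m ≤ Real.log ((2 / r) ^ d) := Real.log_le_log hm hmle
      rw [Real.log_pow] at h1
      refine h1.trans (mul_le_mul_of_nonneg_left ?_ (Nat.cast_nonneg d))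
      exact le_max_left _ _
    by_cases hql : Real.log (q y) ≤ 0
    · have h0 : logPlus (q y) = 0 := max_eq_right hql
      simp [h0]
    push_neg at hql
    have hDy : D y = ENNReal.ofReal (Real.log (q y / m)) := by
      rw [hD, if_neg (not_le.mpr hm)]
    rw [hDy]
    have hmy : m ≤ q y := hminf y hyC
    have hlogdiv : Real.log (q y / m) = Real.log (q y) - Real.log m :=
      Real.log_div (ne_of_gt hqy) (ne_of_gt hm)
    have h1 : logPlus (q y) = Real.log (q y) := max_eq_left hql.le
    rw [h1, hc0]
    calc ENNReal.ofReal (Real.log (q y))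
        ≤ ENNReal.ofReal (Real.log (q y / m) + (d : ℝ) * logPlus (2 / r)) := by
          apply ENNReal.ofReal_le_ofReal
          rw [hlogdiv]; linarith
      _ ≤ ENNReal.ofReal (Real.log (q y / m)) + ENNReal.ofReal ((d : ℝ) * logPlus (2 / r)) :=
          ENNReal.ofReal_add_le
      _ = ENNReal.ofReal (Real.log (q y / m)) + (d : ℝ≥0∞) * ENNReal.ofReal (logPlus (2 / r)) := by
          rw [ENNReal.ofReal_mul (Nat.cast_nonneg d), ENNReal.ofReal_natCast]
  refine ⟨hkey, ?_⟩
  have hs : MeasurableSet {x | 0 < q x} := measurableSet_lt measurable_const hmq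
  have hlp : Measurable fun y => ENNReal.ofReal (logPlus (q y)) := by
    simp only [logPlus]
    exact ((Real.measurable_log.comp hmq).max measurable_const).ennreal_ofReal
  have hLHS : ∫⁻ y, ENNReal.ofReal (q y * logPlus (q y))
      = ∫⁻ y, ENNReal.ofReal (logPlus (q y)) ∂Q := by
    rw [hQ, lintegral_withDensity_eq_lintegral_mul _ hmq.ennreal_ofReal hlp]
    congr 1; funext y
    simp only [Pi.mul_apply]
    rw [← ENNReal.ofReal_mul (hqnn y)]
  have hmemae : ∀ᵐ y ∂Q, 0 < q y := by
    have hsc : MeasurableSet {a | ¬0 < q a} := hs.compl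
    rw [ae_iff, hQ, withDensity_apply _ hsc]
    have h0 : ∀ᵐ x ∂(volume.restrict {a | ¬0 < q a}), ENNReal.ofReal (q x) = 0 := by
      refine (ae_restrict_iff' hsc).2 (ae_of_all _ fun x hx => ?_)
      simp only [Set.mem_setOf_eq, not_lt] at hx
      exact ENNReal.ofReal_eq_zero.mpr hx
    rw [lintegral_congr_ae h0, lintegral_zero]
  have hQuniv : Q Set.univ = 1 := by
    rw [hQ, withDensity_apply _ MeasurableSet.univ, Measure.restrict_univ]
    exact hint
  rw [hLHS]
  calc ∫⁻ y, ENNReal.ofReal (logPlus (q y)) ∂Q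
      = ∫⁻ y in {x | 0 < q x}, ENNReal.ofReal (logPlus (q y)) ∂Q := by
        have hmem' : ∀ᵐ y ∂Q, y ∈ {x | 0 < q x} := hmemae
        rw [Measure.restrict_eq_self_of_ae_mem hmem']
    _ ≤ ∫⁻ y in {x | 0 < q x}, (D y + c0) ∂Q := by
        refine lintegral_mono_ae ?_
        filter_upwards [ae_restrict_of_ae hkey, ae_restrict_mem hs] with y h1 h2
        exact h1 h2
    _ = (∫⁻ y in {x | 0 < q x}, D y ∂Q) + c0 * Q {x | 0 < q x} := by
        rw [lintegral_add_right _ measurable_const, setLIntegral_const]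
    _ ≤ (∫⁻ y in {x | 0 < q x}, D y ∂Q) + c0 * 1 := by
        gcongr
        rw [← hQuniv]
        exact measure_mono (Set.subset_univ _)
    _ = (∫⁻ y in {x | 0 < q x}, D y ∂Q) + c0 := by rw [mul_one]
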